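/- Let G be a finitely generated group with at least two ends, i.e. e(G) ≥ 2. Then there exists a G-effectively closed subshift (over the alphabet {0,1,2}) which is not sofic. -/

import Mathlib

open scoped Classical

noncomputable section

namespace SDG

/-! ### Relativized computability -/

/-- Partial recursive functions `ℕ →. ℕ` relative to an oracle `O`. -/
inductive NatPartrecIn (O : ℕ →. ℕ) : (ℕ →. ℕ) → Prop
  | oracle : NatPartrecIn O O
  | zero : NatPartrecIn O (pure 0)
  | succ : NatPartrecIn O Nat.succ
  | left : NatPartrecIn O ↑fun n : ℕ => n.unpair.1
  | right : NatPartrecIn O ↑fun n : ℕ => n.unpair.2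
  | pair {f g} : NatPartrecIn O f → NatPartrecIn O g →
      NatPartrecIn O fun n => Nat.pair <$> f n <*> g n
  | comp {f g} : NatPartrecIn O f → NatPartrecIn O g →
      NatPartrecIn O fun n => g n >>= f
  | prec {f g} : NatPartrecIn O f → NatPartrecIn O g →
      NatPartrecIn O (Nat.unpaired fun a n =>
        n.rec (f a) fun y IH => do let i ← IH; g (Nat.pair a (Nat.pair y i)))
  | rfind {f} : NatPartrecIn O f →
      NatPartrecIn O fun a => Nat.rfind fun n => (fun m => m = 0) <$> f (Nat.pair a n)

/-- A partial function between `Primcodable` types is partial recursive in the oracle `O`. -/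
def PartrecIn (O : ℕ →. ℕ) {α σ : Type} [Primcodable α] [Primcodable σ] (f : α →. σ) : Prop :=
  NatPartrecIn O fun n =>
    Part.bind (Part.ofOption (Encodable.decode (α := α) n)) fun a => (f a).map Encodable.encode

/-- A predicate is recursively enumerable in the oracle `O` if it is the domain of a partial
function recursive in `O`. -/
def RePredIn (O : ℕ →. ℕ) {α : Type} [Primcodable α] (p : α → Prop) : Prop :=
  PartrecIn O fun a => Part.assert (p a) fun _ => Part.some ()

/-- The characteristic function (as an oracle `ℕ →. ℕ`) of a set `L` of elements of a
`Primcodable` type: on the code of an element of `L` it answers `1`, elsewhere `0`. -/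
def charFun {α : Type} [Primcodable α] (L : Set α) : ℕ →. ℕ :=
  fun n => Part.some (if ∃ a ∈ L, Encodable.encode a = n then 1 else 0)

/-! ### Finitely generated groups, words and pattern codings -/

variable {G : Type} [Group G]

/-- The group element represented by a word over the generators `S`. -/
def wordEval {k : ℕ} (S : Fin k → G) (w : List (Fin k)) : G :=
  (w.map S).prod

/-- `S : Fin k → G` is a finite symmetric generating family containing the identity. -/
def IsGenData {k : ℕ} (S : Fin k → G) : Prop :=
  (∃ i, S i = 1) ∧ (∀ i, ∃ j, S j = (S i)⁻¹) ∧ Subgroup.closure (Set.range S) = ⊤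

/-- The word problem of `G` with respect to the generating family `S`. -/
def WP {k : ℕ} (S : Fin k → G) : Set (List (Fin k)) :=
  {w | wordEval S w = 1}

/-- A pattern coding over the alphabet `A`: a finite list of pairs (word, symbol). -/
abbrev PatternCoding (k : ℕ) (A : Type) : Type :=
  List (List (Fin k) × A)

/-- The subshift defined by a set `C` of pattern codings: configurations in which no translate
of a coded pattern occurs. -/
def XC {k : ℕ} (S : Fin k → G) {A : Type} (C : Set (PatternCoding k A)) : Set (G → A) :=
  {x | ¬ ∃ (g : G) (c : PatternCoding k A), c ∈ C ∧ ∀ p ∈ c, x (g * wordEval S p.1) = p.2}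

/-- A set is effectively closed if it is defined by a recursively enumerable set of
pattern codings. -/
def EffectivelyClosed {k : ℕ} (S : Fin k → G) {A : Type} [Primcodable A]
    (X : Set (G → A)) : Prop :=
  ∃ C : Set (PatternCoding k A), REPred (· ∈ C) ∧ X = XC S C

/-- A set is `G`-effectively closed if it is defined by a set of pattern codings which is
recursively enumerable with oracle the word problem of `G`. -/
def GEffectivelyClosed {k : ℕ} (S : Fin k → G) {A : Type} [Primcodable A]
    (X : Set (G → A)) : Prop :=
  ∃ C : Set (PatternCoding k A), RePredIn (charFun (WP S)) (· ∈ C) ∧ X = XC S C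

/-- A pattern coding is consistent if words representing the same group element receive the
same symbol. -/
def Consistent {k : ℕ} (S : Fin k → G) {A : Type} (c : PatternCoding k A) : Prop :=
  ∀ p ∈ c, ∀ q ∈ c, wordEval S p.1 = wordEval S q.1 → p.2 = q.2

/-! ### Subshifts, SFTs, sofic subshifts -/

/-- `X ⊆ A^G` is a subshift: closed (for the product of the discrete topology) and
shift-invariant. -/
def IsSubshift {A : Type} (X : Set (G → A)) : Prop :=
  (letI : TopologicalSpace A := ⊥; IsClosed X) ∧
    ∀ x ∈ X, ∀ g : G, (fun h => x (g⁻¹ * h)) ∈ X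

/-- A pattern with finite support over the alphabet `A`. -/
structure Pattern (G : Type) (A : Type) where
  supp : Finset G
  val : (g : G) → g ∈ supp → A

/-- The pattern `p` occurs in the configuration `x` at position `g`. -/
def PatternOccurs {A : Type} (p : Pattern G A) (x : G → A) (g : G) : Prop :=
  ∀ (h : G) (hh : h ∈ p.supp), x (g * h) = p.val h hh

/-- The subshift defined by a set of forbidden patterns. -/
def XPat {A : Type} (Fs : Set (Pattern G A)) : Set (G → A) :=
  {x | ¬ ∃ (g : G) (p : Pattern G A), p ∈ Fs ∧ PatternOccurs p x g}

/-- A subshift of finite type: defined by a finite set of forbidden patterns. -/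
def IsSFT {A : Type} (X : Set (G → A)) : Prop :=
  ∃ Fs : Set (Pattern G A), Fs.Finite ∧ X = XPat Fs

/-- A witness that `X` is sofic: an SFT `Y` over a finite alphabet `B` together with a factor
code (continuous shift-equivariant surjection) from `Y` onto `X`. -/
structure SoficVia (G : Type) [Group G] {A : Type} (X : Set (G → A)) : Type 1 where
  B : Type
  finB : Fintype B
  Y : Set (G → B)
  sft : IsSFT Y
  subY : IsSubshift Y
  phi : (G → B) → (G → A)
  cont : letI : TopologicalSpace B := ⊥
         letI : TopologicalSpace A := ⊥
         ContinuousOn phi Y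
  equiv : ∀ y ∈ Y, ∀ g : G, phi (fun h => y (g⁻¹ * h)) = fun h => phi y (g⁻¹ * h)
  image : phi '' Y = X

/-- A subshift is sofic if it is the image of an SFT under a factor code. -/
def IsSofic {A : Type} (X : Set (G → A)) : Prop :=
  Nonempty (SoficVia G X)

/-- A factor code from `X` onto `Y`: continuous (discrete product topologies),
shift-equivariant and surjective. -/
def FactorCode {A B : Type} (X : Set (G → A)) (Y : Set (G → B))
    (φ : (G → A) → (G → B)) : Prop :=
  (letI : TopologicalSpace A := ⊥
   letI : TopologicalSpace B := ⊥
   ContinuousOn φ X) ∧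
  (∀ x ∈ X, ∀ g : G, φ (fun h => x (g⁻¹ * h)) = fun h => φ x (g⁻¹ * h)) ∧
  φ '' X = Y

/-- Two subshifts are conjugate if there is a shift-equivariant homeomorphism between them. -/
def Conjugate {A B : Type} (X : Set (G → A)) (Y : Set (G → B)) : Prop :=
  ∃ (φ : (G → A) → (G → B)) (ψ : (G → B) → (G → A)),
    FactorCode X Y φ ∧ FactorCode Y X ψ ∧
    (∀ x ∈ X, ψ (φ x) = x) ∧ (∀ y ∈ Y, φ (ψ y) = y)

/-- The one-or-less subshift: configurations with at most one occurrence of the symbol `1`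
(represented by `true`). -/
def Xle1 (G : Type) : Set (G → Bool) :=
  {x | ∀ g h : G, x g = true → x h = true → g = h}

/-! ### `G`-machines -/

/-- A `G`-machine: finite set of states, finite tape alphabet `A` with a blank symbol, initial
state, accepting states, and a transition function moving with the generators `Fin k`. -/
structure GMachine (k : ℕ) (A : Type) : Type 1 where
  Q : Type
  finQ : Fintype Q
  blank : A
  q0 : Q
  QF : Set Q
  delta : A × Q → A × Q × Fin k

/-- One step of a `G`-machine in the fixed head model: if `δ(x(1),q) = (a,q',s)` then the new
configuration is `σ_{s⁻¹} x̃` where `x̃` is `x` with the value at `1` replaced by `a`. -/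
def GMachine.step {k : ℕ} {A : Type} (M : GMachine k A) (S : Fin k → G) :
    (G → A) × M.Q → (G → A) × M.Q :=
  fun xq =>
    let t := M.delta (xq.1 1, xq.2)
    let xt : G → A := Function.update xq.1 1 t.1
    (fun h => xt (S t.2.2 * h), t.2.1)

/-- The configuration which equals the pattern `p` on its support and `blank` elsewhere. -/
def Pattern.config {A : Type} (p : Pattern G A) (blank : A) : G → A :=
  fun g => if h : g ∈ p.supp then p.val g h else blank

/-- The `G`-machine `M` accepts the pattern `p` if starting from the configuration `x^p` in the
initial state it eventually reaches an accepting state. -/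
def GMachine.Accepts {k : ℕ} {A : Type} (M : GMachine k A) (S : Fin k → G)
    (p : Pattern G A) : Prop :=
  ∃ n : ℕ, ((M.step S)^[n] (p.config M.blank, M.q0)).2 ∈ M.QF

/-- A set of patterns is `G`-recursively enumerable if some `G`-machine accepts exactly its
elements. -/
def GRecEnum {k : ℕ} (S : Fin k → G) {A : Type} (L : Set (Pattern G A)) : Prop :=
  ∃ M : GMachine k A, ∀ p : Pattern G A, M.Accepts S p ↔ p ∈ L

/-- The consistent pattern coding `c` defines the pattern `p`. -/
def Defines {k : ℕ} (S : Fin k → G) {A : Type} (c : PatternCoding k A)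
    (p : Pattern G A) : Prop :=
  (∀ g : G, g ∈ p.supp ↔ ∃ q ∈ c, wordEval S q.1 = g) ∧
  ∀ q ∈ c, ∀ hg : wordEval S q.1 ∈ p.supp, p.val (wordEval S q.1) hg = q.2

/-- `p(C)`: the set of patterns defined by the consistent pattern codings of `C`. -/
def patternsOf {k : ℕ} (S : Fin k → G) {A : Type} (C : Set (PatternCoding k A)) :
    Set (Pattern G A) :=
  {p | ∃ c ∈ C, Consistent S c ∧ Defines S c p}

/-- A set of patterns is closed by extensions if any pattern extending a pattern of the set
also belongs to the set. -/
def ClosedByExtensions {A : Type} (L : Set (Pattern G A)) : Prop :=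
  ∀ (p₁ p₂ : Pattern G A) (hsub : p₁.supp ⊆ p₂.supp),
    (∀ (g : G) (hg : g ∈ p₁.supp), p₂.val g (hsub hg) = p₁.val g hg) →
    p₁ ∈ L → p₂ ∈ L

/-! ### Balls, ends, amenability -/

/-- The ball of radius `n` in the word metric given by `S`. -/
def ballS {k : ℕ} (S : Fin k → G) (n : ℕ) : Set G :=
  {x | ∃ w : List (Fin k), w.length ≤ n ∧ wordEval S w = x}

/-- Adjacency in the Cayley graph restricted to the set `V`. -/
def Adj {k : ℕ} (S : Fin k → G) (V : Set G) (a b : G) : Prop :=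
  a ∈ V ∧ b ∈ V ∧ ∃ i, a * S i = b

/-- Reachability inside `V` in the Cayley graph of `(G,S)`. -/
def Reach {k : ℕ} (S : Fin k → G) (V : Set G) (a b : G) : Prop :=
  Relation.ReflTransGen (Adj S V) a b

/-- `G` has at least two ends: for some `n`, the complement of the ball of radius `n` in the
Cayley graph has at least two infinite connected components. -/
def HasTwoOrMoreEnds {k : ℕ} (S : Fin k → G) : Prop :=
  ∃ (n : ℕ) (x y : G), x ∉ ballS S n ∧ y ∉ ballS S n ∧
    {z | Reach S (ballS S n)ᶜ x z}.Infinite ∧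
    {z | Reach S (ballS S n)ᶜ y z}.Infinite ∧
    ¬ Reach S (ballS S n)ᶜ x y

/-- The Følner condition: `G` is amenable. -/
def FolnerAmenable (G : Type) [Group G] : Prop :=
  ∀ (K : Finset G) (ε : ℝ), 0 < ε →
    ∃ F : Finset G, F.Nonempty ∧ ∀ k ∈ K,
      ((F \ F.image (fun x => x * k)).card : ℝ) < ε * F.card

/-! ### `G × ℤ`, presentations, hardness and the domino problems -/

/-- Generators of `G × ℤ`: the generators of `G` paired with `0`, together with `(1,±1)`. -/
def prodGens {k : ℕ} (S : Fin k → G) : Fin (k + 2) → G × Multiplicative ℤ :=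
  fun i =>
    if h : (i : ℕ) < k then (S ⟨i, h⟩, 1)
    else if (i : ℕ) = k then (1, Multiplicative.ofAdd 1)
    else (1, Multiplicative.ofAdd (-1))

/-- The element of the free group over the generator indices represented by a word. -/
def freeWord {k : ℕ} (w : List (Fin k)) : FreeGroup (Fin k) :=
  (w.map FreeGroup.of).prod

/-- `G` is recursively presented with respect to `S`: there is a recursively enumerable set of
relators (words over the generators) whose normal closure in the free group over the
generator indices is the kernel of the evaluation map. -/
def RecursivelyPresented {k : ℕ} (S : Fin k → G) : Prop :=
  ∃ R : Set (List (Fin k)), REPred (· ∈ R) ∧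
    MonoidHom.ker (FreeGroup.lift S) = Subgroup.normalClosure (freeWord '' R)

/-- `L` is hard for the class of predicates recursively enumerable in the oracle `O`
(equivalently, hard for the halting problem of machines with oracle `O`): every
such predicate many-one reduces to `L` via a computable function. -/
def OracleREHard {α : Type} [Primcodable α] (O : ℕ →. ℕ) (L : Set α) : Prop :=
  ∀ p : ℕ → Prop, RePredIn O p → ∃ f : ℕ → α, Computable f ∧ ∀ n, p n ↔ f n ∈ L

/-- The domino problem of `(K,T)`: pairs `(N, F)` of an alphabet size and a finite list of
pattern codings over `ℕ` such that no configuration with symbols `< N` avoids `F`. -/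
def DP {K : Type} [Group K] {m : ℕ} (T : Fin m → K) : Set (ℕ × List (PatternCoding m ℕ)) :=
  {q | ¬ ∃ x : K → ℕ, (∀ g, x g < q.1) ∧ x ∈ XC T {c | c ∈ q.2}}

/-- The origin constrained domino problem of `(K,T)`: triples `((N,a),F)` such that no
configuration with symbols `< N` and the symbol `a` at the origin avoids `F`. -/
def OCDP {K : Type} [Group K] {m : ℕ} (T : Fin m → K) :
    Set ((ℕ × ℕ) × List (PatternCoding m ℕ)) :=
  {q | ¬ ∃ x : K → ℕ, (∀ g, x g < q.1.1) ∧ x 1 = q.1.2 ∧ x ∈ XC T {c | c ∈ q.2}}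

/-! ### Relativized computability API -/

section AuxComp

variable {O : ℕ →. ℕ}


variable {O : ℕ →. ℕ}

theorem NatPartrecIn.of_eq {f g : ℕ →. ℕ} (hf : NatPartrecIn O f) (H : ∀ n, f n = g n) :
    NatPartrecIn O g := (funext H : f = g) ▸ hf

theorem NatPartrecIn.of_partrec {f : ℕ →. ℕ} (hf : Nat.Partrec f) : NatPartrecIn O f := by
  induction hf with
  | zero => exact .zero
  | succ => exact .succ
  | left => exact .left
  | right => exact .right
  | pair _ _ ih1 ih2 => exact .pair ih1 ih2
  | comp _ _ ih1 ih2 => exact .comp ih1 ih2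
  | prec _ _ ih1 ih2 => exact .prec ih1 ih2
  | rfind _ ih => exact .rfind ih

variable {α β γ σ : Type} [Primcodable α] [Primcodable β] [Primcodable γ] [Primcodable σ]

def ComputableIn (O : ℕ →. ℕ) (f : α → σ) : Prop := PartrecIn O (f : α →. σ)

def PartrecIn₂ (O : ℕ →. ℕ) (f : α → β →. σ) : Prop := PartrecIn O fun p : α × β => f p.1 p.2

def ComputableIn₂ (O : ℕ →. ℕ) (f : α → β → σ) : Prop := ComputableIn O fun p : α × β => f p.1 p.2

theorem Partrec.partrecIn {f : α →. σ} (hf : Partrec f) : PartrecIn O f :=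
  NatPartrecIn.of_partrec hf

theorem Computable.computableIn {f : α → σ} (hf : Computable f) : ComputableIn O f :=
  Partrec.partrecIn hf

theorem Computable₂.computableIn₂ {f : α → β → σ} (hf : Computable₂ f) : ComputableIn₂ O f :=
  Computable.computableIn hf

theorem PartrecIn.of_eq {f g : α →. σ} (hf : PartrecIn O f) (H : ∀ n, f n = g n) :
    PartrecIn O g := (funext H : f = g) ▸ hf

theorem PartrecIn.of_eq_tot {f : α →. σ} {g : α → σ} (hf : PartrecIn O f)
    (H : ∀ n, g n ∈ f n) : ComputableIn O g :=
  hf.of_eq fun a => Part.eq_some_iff.2 (H a)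

theorem PartrecIn.comp {f : β →. σ} {g : α → β} (hf : PartrecIn O f) (hg : Computable g) :
    PartrecIn O fun a => f (g a) :=
  (NatPartrecIn.comp hf (NatPartrecIn.of_partrec hg)).of_eq fun n => by
    simp only []
    cases' e : Encodable.decode (α := α) n with a <;>
      simp [e, Encodable.encodek, Part.bind_assoc, Part.bind_some]

theorem PartrecIn.bind {f : α →. β} {g : α → β →. σ} (hf : PartrecIn O f)
    (hg : PartrecIn₂ O g) : PartrecIn O fun a => (f a).bind (g a) :=
  (NatPartrecIn.comp hg (NatPartrecIn.pair (NatPartrecIn.of_partrec Nat.Partrec.some) hf)).of_eq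
    fun n => by
    simp [Seq.seq]; cases' e : Encodable.decode (α := α) n with a <;> simp [e, Encodable.encodek, Part.map_bind]
    exact (Part.map_bind _ _ _).symm

theorem PartrecIn.map {f : α →. β} {g : α → β → σ} (hf : PartrecIn O f) (hg : Computable₂ g) :
    PartrecIn O fun a => (f a).map (g a) := by
  simpa [Part.bind_some_eq_map] using
    PartrecIn.bind (g := fun a x => Part.some (g a x)) hf (Computable₂.computableIn₂ hg)

theorem ComputableIn.comp {f : β → σ} {g : α → β} (hf : ComputableIn O f) (hg : Computable g) :
    ComputableIn O fun a => f (g a) :=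
  show PartrecIn O fun a => (f : β →. σ) (g a) from PartrecIn.comp hf hg

theorem ComputableIn.comp' {f : β → σ} {g : α → β} (hf : Computable f) (hg : ComputableIn O g) :
    ComputableIn O fun a => f (g a) :=
  (PartrecIn.map hg (Computable.comp hf Computable.snd).to₂ :
    PartrecIn O fun a => (Part.some (g a)).map fun b => f b).of_eq fun a => by simp

theorem ComputableIn.pair {f : α → β} {g : α → γ} (hf : ComputableIn O f)
    (hg : ComputableIn O g) : ComputableIn O fun a => (f a, g a) :=
  (NatPartrecIn.pair hf hg).of_eq fun n => by
    cases' e : Encodable.decode (α := α) n with a <;>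
      simp [e, Seq.seq, Encodable.encode_prod_val]

theorem PartrecIn.rfind {p : α → ℕ →. Bool} (hp : PartrecIn₂ O p) :
    PartrecIn O fun a => Nat.rfind (p a) :=
  (NatPartrecIn.rfind <|
        (PartrecIn.map hp ((Primrec.dom_bool fun b => cond b 0 1).comp
          Primrec.snd).to₂.to_comp :)).of_eq
    fun n => by
    cases' e : Encodable.decode (α := α) n with a <;>
      simp [e, Nat.rfind_zero_none, Part.map_id']
    · exact Nat.rfind_zero_none _ rfl
    congr; funext m
    simp only [Part.map_map, Function.comp]
    refine Part.map_id' (fun b => ?_) _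
    cases b <;> rfl

theorem PartrecIn.oracle : PartrecIn O O :=
  NatPartrecIn.oracle.of_eq fun n => by simp [Part.map_id']


end AuxComp


/-! ### Auxiliary: words and geometry -/

section AuxGeom

variable {k : ℕ}

theorem wordEval_nil (S : Fin k → G) : wordEval S ([] : List (Fin k)) = 1 := rfl

theorem wordEval_cons (S : Fin k → G) (i : Fin k) (w : List (Fin k)) :
    wordEval S (i :: w) = S i * wordEval S w := by simp [wordEval]

theorem wordEval_append (S : Fin k → G) (w₁ w₂ : List (Fin k)) :
    wordEval S (w₁ ++ w₂) = wordEval S w₁ * wordEval S w₂ := by simp [wordEval]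

/-- Letterwise inverse word. -/
def invWord (ι : Fin k → Fin k) (w : List (Fin k)) : List (Fin k) := (w.map ι).reverse

theorem invWord_length (ι : Fin k → Fin k) (w : List (Fin k)) :
    (invWord ι w).length = w.length := by simp [invWord]

theorem wordEval_invWord {S : Fin k → G} {ι : Fin k → Fin k} (hι : ∀ i, S (ι i) = (S i)⁻¹)
    (w : List (Fin k)) : wordEval S (invWord ι w) = (wordEval S w)⁻¹ := by
  unfold invWord wordEval
  rw [List.prod_inv_reverse, List.map_reverse, List.map_map, List.map_map]
  congr 2
  exact List.map_congr_left fun i _ => by simp [hι]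

theorem exists_word_of_gen {S : Fin k → G} (hS : IsGenData S) (g : G) :
    ∃ w : List (Fin k), wordEval S w = g := by
  obtain ⟨⟨i₀, hi₀⟩, hinv, hclos⟩ := hS
  have hg : g ∈ Subgroup.closure (Set.range S) := by rw [hclos]; trivial
  induction hg using Subgroup.closure_induction with
  | mem z hz =>
      obtain ⟨i, rfl⟩ := hz
      exact ⟨[i], by simp [wordEval]⟩
  | one => exact ⟨[], rfl⟩
  | mul a b _ _ iha ihb =>
      obtain ⟨wa, hwa⟩ := iha; obtain ⟨wb, hwb⟩ := ihb
      exact ⟨wa ++ wb, by rw [wordEval_append, hwa, hwb]⟩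
  | inv a _ iha =>
      obtain ⟨wa, hwa⟩ := iha
      classical
      set ι : Fin k → Fin k := fun i => Classical.choose (hinv i) with hι'
      have hι : ∀ i, S (ι i) = (S i)⁻¹ := fun i => Classical.choose_spec (hinv i)
      exact ⟨invWord ι wa, by rw [wordEval_invWord hι, hwa]⟩

theorem mem_ballS {S : Fin k → G} {t : ℕ} {g : G} :
    g ∈ ballS S t ↔ ∃ w : List (Fin k), w.length ≤ t ∧ wordEval S w = g := Iff.rfl

theorem ballS_mono {S : Fin k → G} {s t : ℕ} (h : s ≤ t) : ballS S s ⊆ ballS S t := by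
  rintro g ⟨w, hw, rfl⟩; exact ⟨w, hw.trans h, rfl⟩

/-- Word length of a group element (0 if not representable, which won't happen). -/
def wlen (S : Fin k → G) (g : G) : ℕ := sInf {t | g ∈ ballS S t}

section WithGen

variable {S : Fin k → G}

theorem mem_ballS_wlen (hw : ∀ g : G, ∃ w : List (Fin k), wordEval S w = g) (g : G) : g ∈ ballS S (wlen S g) := by
  obtain ⟨w, hweval⟩ := hw g
  exact Nat.sInf_mem (⟨w.length, w, le_rfl, hweval⟩ : {t | g ∈ ballS S t}.Nonempty)

theorem wlen_le_iff (hw : ∀ g : G, ∃ w : List (Fin k), wordEval S w = g) {g : G} {t : ℕ} : wlen S g ≤ t ↔ g ∈ ballS S t := by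
  constructor
  · intro h; exact ballS_mono h (mem_ballS_wlen hw g)
  · intro h; exact Nat.sInf_le h

theorem exists_word_wlen (hw : ∀ g : G, ∃ w : List (Fin k), wordEval S w = g) (g : G) : ∃ w : List (Fin k), w.length ≤ wlen S g ∧ wordEval S w = g :=
  mem_ballS_wlen hw g

theorem wlen_le_of_eval {w : List (Fin k)} {g : G} (h : wordEval S w = g) :
    wlen S g ≤ w.length := Nat.sInf_le ⟨w, le_rfl, h⟩

theorem wlen_mul_le (hw : ∀ g : G, ∃ w : List (Fin k), wordEval S w = g) (g h : G) : wlen S (g * h) ≤ wlen S g + wlen S h := by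
  obtain ⟨w₁, hl₁, he₁⟩ := exists_word_wlen hw g
  obtain ⟨w₂, hl₂, he₂⟩ := exists_word_wlen hw h
  calc wlen S (g * h) ≤ (w₁ ++ w₂).length :=
        wlen_le_of_eval (by rw [wordEval_append, he₁, he₂])
    _ ≤ wlen S g + wlen S h := by simp [Nat.add_le_add hl₁ hl₂]

theorem wlen_inv_le (hw : ∀ g : G, ∃ w : List (Fin k), wordEval S w = g) {ι : Fin k → Fin k} (hι : ∀ i, S (ι i) = (S i)⁻¹) (g : G) :
    wlen S g⁻¹ ≤ wlen S g := by
  obtain ⟨w, hl, he⟩ := exists_word_wlen hw g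
  calc wlen S g⁻¹ ≤ (invWord ι w).length :=
        wlen_le_of_eval (by rw [wordEval_invWord hι, he])
    _ ≤ wlen S g := by rw [invWord_length]; exact hl

end WithGen

/-! words enumeration -/

/-- All words of length exactly `t`. -/
def wordsE (k : ℕ) : ℕ → List (List (Fin k))
  | 0 => [[]]
  | t + 1 => (wordsE k t).flatMap fun w => (List.finRange k).map fun i => i :: w

/-- All words of length at most `t`. -/
def wordsLe (k : ℕ) : ℕ → List (List (Fin k))
  | 0 => [[]]
  | t + 1 => wordsLe k t ++ wordsE k (t + 1)

theorem mem_wordsE {k t : ℕ} {w : List (Fin k)} : w ∈ wordsE k t ↔ w.length = t := by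
  induction t generalizing w with
  | zero => simp [wordsE, List.length_eq_zero_iff]
  | succ t ih =>
      simp only [wordsE, List.mem_flatMap, List.mem_map]
      constructor
      · rintro ⟨w', hw', i, -, rfl⟩; simp [ih.1 hw']
      · intro hlen
        cases w with
        | nil => simp at hlen
        | cons i w' =>
            exact ⟨w', ih.2 (by simpa using hlen), i, List.mem_finRange i, rfl⟩

theorem mem_wordsLe {k t : ℕ} {w : List (Fin k)} : w ∈ wordsLe k t ↔ w.length ≤ t := by
  induction t with
  | zero => simp [wordsLe, List.length_eq_zero_iff, Nat.le_zero]
  | succ t ih =>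
      simp only [wordsLe, List.mem_append, ih, mem_wordsE]
      omega

theorem ballS_finite (S : Fin k → G) (t : ℕ) : (ballS S t).Finite := by
  apply Set.Finite.subset (Set.Finite.image (wordEval S) (wordsLe k t).finite_toSet)
  rintro g ⟨w, hl, rfl⟩
  exact ⟨w, mem_wordsLe.2 hl, rfl⟩

/-! Reach -/

theorem reach_trans {S : Fin k → G} {V : Set G} {a b c : G} (h₁ : Reach S V a b)
    (h₂ : Reach S V b c) : Reach S V a c := Relation.ReflTransGen.trans h₁ h₂

theorem adj_symm {S : Fin k → G} {ι : Fin k → Fin k} (hι : ∀ i, S (ι i) = (S i)⁻¹)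
    {V : Set G} {a b : G} (h : Adj S V a b) : Adj S V b a := by
  obtain ⟨ha, hb, i, hi⟩ := h
  exact ⟨hb, ha, ι i, by rw [hι, ← hi]; group⟩

theorem reach_symm {S : Fin k → G} {ι : Fin k → Fin k} (hι : ∀ i, S (ι i) = (S i)⁻¹)
    {V : Set G} {a b : G} (h : Reach S V a b) : Reach S V b a :=
  haveI : Std.Symm (Adj S V) := ⟨fun _ _ hadj => adj_symm hι hadj⟩
  Std.Symm.symm (r := Relation.ReflTransGen (Adj S V)) _ _ h

theorem reach_mem {S : Fin k → G} {V : Set G} {x z : G} (hx : x ∈ V) (h : Reach S V x z) :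
    z ∈ V := by
  induction h with
  | refl => exact hx
  | tail _ hadj _ => exact hadj.2.1

theorem reach_of_prefixes {S : Fin k → G} {n : ℕ} {u : G} {w : List (Fin k)}
    (h : ∀ t ≤ w.length, u * wordEval S (w.take t) ∉ ballS S n) :
    Reach S (ballS S n)ᶜ u (u * wordEval S w) := by
  induction w generalizing u with
  | nil => rw [wordEval_nil, mul_one]; exact Relation.ReflTransGen.refl
  | cons i w' ih =>
      have hu : u ∈ (ballS S n)ᶜ := by simpa [wordEval_nil] using h 0 (Nat.zero_le _)
      have hui : u * S i ∈ (ballS S n)ᶜ := by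
        have := h 1 (by simp)
        simpa [wordEval_cons, wordEval_nil] using this
      have hadj : Adj S (ballS S n)ᶜ u (u * S i) := ⟨hu, hui, i, rfl⟩
      have ih' : Reach S (ballS S n)ᶜ (u * S i) ((u * S i) * wordEval S w') := by
        apply ih
        intro t ht
        have := h (t + 1) (by simpa using Nat.succ_le_succ ht)
        simpa [wordEval_cons, mul_assoc] using this
      have : Reach S (ballS S n)ᶜ u ((u * S i) * wordEval S w') :=
        Relation.ReflTransGen.head hadj ih'
      simpa [wordEval_cons, mul_assoc] using this

theorem reach_or_ball {S : Fin k → G} (hw : ∀ g : G, ∃ w : List (Fin k), wordEval S w = g)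
    {ι : Fin k → Fin k} (hι : ∀ i, S (ι i) = (S i)⁻¹) {n d : ℕ} {u v : G}
    (hu : u ∉ ballS S n) (hd : wlen S (u⁻¹ * v) ≤ d) :
    Reach S (ballS S n)ᶜ u v ∨ (u ∈ ballS S (n + d) ∧ v ∈ ballS S (n + d)) := by
  obtain ⟨w, hlen, heval⟩ := exists_word_wlen hw (u⁻¹ * v)
  have hlend : w.length ≤ d := hlen.trans hd
  by_cases hall : ∀ t ≤ w.length, u * wordEval S (w.take t) ∉ ballS S n
  · left
    have := reach_of_prefixes hall
    rwa [heval, mul_inv_cancel_left] at this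
  · right
    push_neg at hall
    obtain ⟨t, ht, hmem⟩ := hall
    obtain ⟨wp, hlp, hep⟩ := hmem
    constructor
    · -- u = (u * eval(take t)) * (eval (take t))⁻¹
      refine ⟨wp ++ invWord ι (w.take t), ?_, ?_⟩
      · have : (w.take t).length ≤ t := by simp [List.length_take]
        simp only [List.length_append, invWord_length]
        omega
      · rw [wordEval_append, hep, wordEval_invWord hι]
        group
    · -- v = (u * eval (take t)) * eval (drop t)
      refine ⟨wp ++ w.drop t, ?_, ?_⟩
      · have h1 : (w.drop t).length = w.length - t := by simp
        simp only [List.length_append, h1]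
        omega
      · rw [wordEval_append, hep, mul_assoc, ← wordEval_append, List.take_append_drop, heval,
          mul_inv_cancel_left]

theorem wlen_adj_le {S : Fin k → G} (hw : ∀ g : G, ∃ w : List (Fin k), wordEval S w = g)
    {ι : Fin k → Fin k} (hι : ∀ i, S (ι i) = (S i)⁻¹) {a b : G} (h : ∃ i, a * S i = b) :
    wlen S b ≤ wlen S a + 1 ∧ wlen S a ≤ wlen S b + 1 := by
  obtain ⟨i, rfl⟩ := h
  constructor
  · calc wlen S (a * S i) ≤ wlen S a + wlen S (S i) := wlen_mul_le hw _ _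
      _ ≤ wlen S a + 1 := by
          have : wlen S (S i) ≤ 1 := wlen_le_of_eval (w := [i]) (by simp [wordEval])
          omega
  · have : a = (a * S i) * S (ι i) := by rw [hι]; group
    calc wlen S a = wlen S ((a * S i) * S (ι i)) := by rw [← this]
      _ ≤ wlen S (a * S i) + wlen S (S (ι i)) := wlen_mul_le hw _ _
      _ ≤ wlen S (a * S i) + 1 := by
          have : wlen S (S (ι i)) ≤ 1 := wlen_le_of_eval (w := [ι i]) (by simp [wordEval])
          omega

/-- Discrete intermediate value theorem along reachability. -/
theorem exists_wlen_eq {S : Fin k → G} (hw : ∀ g : G, ∃ w : List (Fin k), wordEval S w = g)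
    {ι : Fin k → Fin k} (hι : ∀ i, S (ι i) = (S i)⁻¹) {n : ℕ} {x u : G}
    (hr : Reach S (ballS S n)ᶜ x u) {m : ℕ} (h1 : wlen S x ≤ m) (h2 : m ≤ wlen S u) :
    ∃ a : G, Reach S (ballS S n)ᶜ x a ∧ wlen S a = m := by
  induction hr with
  | refl => exact ⟨x, Relation.ReflTransGen.refl, le_antisymm h1 h2⟩
  | @tail b c hxb hadj ih =>
      by_cases hm : m ≤ wlen S b
      · exact ih hm
      · push_neg at hm
        have hle := (wlen_adj_le hw hι hadj.2.2).1
        have : m = wlen S c := by omega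
        exact ⟨c, Relation.ReflTransGen.tail hxb hadj, this.symm⟩

theorem exists_wlen_ge {S : Fin k → G} (hw : ∀ g : G, ∃ w : List (Fin k), wordEval S w = g)
    {C : Set G} (hC : C.Infinite) (m : ℕ) : ∃ u ∈ C, m ≤ wlen S u := by
  by_contra hcon
  push_neg at hcon
  apply hC
  apply (ballS_finite S m).subset
  intro u hu
  exact (wlen_le_iff hw).1 (le_of_lt (hcon u hu))

/-! mseq -/

/-- The sparse sequence of scales. -/
def mseq (n : ℕ) : ℕ → ℕ := fun j => Nat.rec (2 * n + 2) (fun _ ih => 3 * ih) j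

theorem mseq_zero (n : ℕ) : mseq n 0 = 2 * n + 2 := rfl

theorem mseq_succ (n j : ℕ) : mseq n (j + 1) = 3 * mseq n j := rfl

theorem mseq_base_le (n j : ℕ) : 2 * n + 2 ≤ mseq n j := by
  induction j with
  | zero => simp [mseq_zero]
  | succ j ih => rw [mseq_succ]; omega

theorem mseq_lt_succ (n j : ℕ) : mseq n j < mseq n (j + 1) := by
  have := mseq_base_le n j
  rw [mseq_succ]; omega

theorem mseq_strictMono (n : ℕ) : StrictMono (mseq n) :=
  strictMono_nat_of_lt_succ (mseq_lt_succ n)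

theorem self_lt_mseq (n j : ℕ) : j < mseq n j := by
  induction j with
  | zero => have := mseq_base_le n 0; omega
  | succ j ih => have := mseq_lt_succ n j; omega

end AuxGeom


/-! ### The construction -/

section AuxConstr

variable {k : ℕ}

/-- The set of allowed relative positions. -/
def Tset (S : Fin k → G) (n : ℕ) : Set G :=
  {g | ∃ j, 2 * mseq n j - 2 * n ≤ wlen S g ∧ wlen S g ≤ 2 * mseq n j}

/-- The subshift. -/
def XT (S : Fin k → G) (n : ℕ) : Set (G → Fin 3) :=
  {x | ∀ u v : G, x u = 1 → x v = 2 → u⁻¹ * v ∈ Tset S n}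

/-- The defining set of pattern codings. -/
def CT (S : Fin k → G) (n : ℕ) : Set (PatternCoding k (Fin 3)) :=
  {c | ∃ w₁ w₂ : List (Fin k), c = [(w₁, 1), (w₂, 2)] ∧
        (wordEval S w₁)⁻¹ * wordEval S w₂ ∉ Tset S n}

theorem XT_isSubshift (S : Fin k → G) (n : ℕ) : IsSubshift (XT S n) := by
  constructor
  · letI : TopologicalSpace (Fin 3) := ⊥
    haveI : DiscreteTopology (Fin 3) := ⟨rfl⟩
    have hX : XT S n =
        ⋂ (u : G) (v : G), {x : G → Fin 3 | x u = 1 → x v = 2 → u⁻¹ * v ∈ Tset S n} := by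
      ext x; simp only [XT, Set.mem_setOf_eq, Set.mem_iInter]
    rw [hX]
    refine isClosed_iInter fun u => isClosed_iInter fun v => ?_
    by_cases hc : u⁻¹ * v ∈ Tset S n
    · have : {x : G → Fin 3 | x u = 1 → x v = 2 → u⁻¹ * v ∈ Tset S n} = Set.univ :=
        Set.eq_univ_of_forall fun x _ _ => hc
      rw [this]; exact isClosed_univ
    · have heq : {x : G → Fin 3 | x u = 1 → x v = 2 → u⁻¹ * v ∈ Tset S n} =
          ({x : G → Fin 3 | x u = 1} ∩ {x : G → Fin 3 | x v = 2})ᶜ := by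
        ext x
        simp only [Set.mem_setOf_eq, Set.mem_compl_iff, Set.mem_inter_iff]
        constructor
        · intro h ⟨h1, h2⟩; exact hc (h h1 h2)
        · intro h h1 h2; exact absurd ⟨h1, h2⟩ h
      rw [heq]
      apply IsOpen.isClosed_compl
      apply IsOpen.inter
      · exact (continuous_apply u).isOpen_preimage {1} (isOpen_discrete _)
      · exact (continuous_apply v).isOpen_preimage {2} (isOpen_discrete _)
  · intro x hx g u v h1 h2
    have hkey : u⁻¹ * v = (g⁻¹ * u)⁻¹ * (g⁻¹ * v) := by group
    rw [hkey]
    exact hx (g⁻¹ * u) (g⁻¹ * v) h1 h2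

theorem XT_eq_XC {S : Fin k → G} (hw : ∀ g : G, ∃ w : List (Fin k), wordEval S w = g) (n : ℕ) :
    XT S n = XC S (CT S n) := by
  ext x
  constructor
  · intro hx
    rintro ⟨g, c, ⟨w₁, w₂, rfl, hT⟩, hocc⟩
    have h1 : x (g * wordEval S w₁) = 1 := hocc (w₁, 1) (by simp)
    have h2 : x (g * wordEval S w₂) = 2 := hocc (w₂, 2) (by simp)
    apply hT
    have hkey : (wordEval S w₁)⁻¹ * wordEval S w₂ =
        (g * wordEval S w₁)⁻¹ * (g * wordEval S w₂) := by group
    rw [hkey]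
    exact hx _ _ h1 h2
  · intro hx u v h1 h2
    by_contra hT
    apply hx
    obtain ⟨w₂, hw₂⟩ := hw (u⁻¹ * v)
    refine ⟨u, [(([] : List (Fin k)), 1), (w₂, 2)], ⟨[], w₂, rfl, ?_⟩, ?_⟩
    · rw [wordEval_nil, hw₂, inv_one, one_mul]; exact hT
    · intro p hp
      simp only [List.mem_cons, List.mem_singleton, List.not_mem_nil, or_false] at hp
      rcases hp with rfl | rfl
      · simpa [wordEval_nil] using h1
      · simpa [hw₂] using h2

theorem diag_mem_Tset {S : Fin k → G} {n j : ℕ} {g : G}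
    (h1 : 2 * mseq n j - 2 * n ≤ wlen S g) (h2 : wlen S g ≤ 2 * mseq n j) :
    g ∈ Tset S n := ⟨j, h1, h2⟩

private theorem cross_helper {n j j' v i : ℕ} (hlt : j < j')
    (h1 : mseq n j + mseq n j' - 2 * n ≤ v) (h2 : v ≤ mseq n j + mseq n j')
    (hi1 : 2 * mseq n i - 2 * n ≤ v) (hi2 : v ≤ 2 * mseq n i) : False := by
  obtain ⟨j'', rfl⟩ : ∃ j'', j' = j'' + 1 := ⟨j' - 1, by omega⟩
  set q := mseq n j'' with hq'
  have h3 : mseq n (j'' + 1) = 3 * q := mseq_succ n j''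
  have hq : 2 * n + 2 ≤ q := mseq_base_le n j''
  have hmj : mseq n j ≤ q := (mseq_strictMono n).monotone (by omega)
  have hmj0 : 2 * n + 2 ≤ mseq n j := mseq_base_le n j
  rcases Nat.lt_or_ge i (j'' + 1) with hi | hi
  · have : mseq n i ≤ q := (mseq_strictMono n).monotone (by omega)
    omega
  · have : 3 * q ≤ mseq n i := by
      rw [← h3]; exact (mseq_strictMono n).monotone hi
    omega

theorem cross_not_mem_Tset {S : Fin k → G} {n j j' : ℕ} (hne : j ≠ j') {g : G}
    (h1 : mseq n j + mseq n j' - 2 * n ≤ wlen S g) (h2 : wlen S g ≤ mseq n j + mseq n j') :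
    g ∉ Tset S n := by
  rintro ⟨i, hi1, hi2⟩
  rcases Nat.lt_or_ge j j' with hlt | hge
  · exact cross_helper hlt h1 h2 hi1 hi2
  · have hlt : j' < j := by omega
    exact cross_helper hlt (by omega) (by omega) hi1 hi2

end AuxConstr


/-! ### Oracle master lemma -/

section AuxMaster

variable {β : Type} [Primcodable β]

/-- The oracle bit for membership of an encoded element. -/
def obitB (L : Set β) (q : ℕ) : ℕ := if ∃ a ∈ L, Encodable.encode a = q then 1 else 0

theorem obitB_encode (L : Set β) (w : β) :
    obitB L (Encodable.encode w) = if w ∈ L then 1 else 0 := by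
  unfold obitB
  by_cases hw : w ∈ L
  · rw [if_pos ⟨w, hw, rfl⟩, if_pos hw]
  · rw [if_neg, if_neg hw]
    rintro ⟨a, ha, hae⟩
    exact hw (Encodable.encode_injective hae ▸ ha)

theorem computableIn_obitB (L : Set β) : ComputableIn (charFun L) (obitB L) :=
  show PartrecIn (charFun L) ((obitB L : ℕ → ℕ) : ℕ →. ℕ) from
    PartrecIn.oracle.of_eq fun _ => rfl

theorem rePredIn_of_plan {α : Type} [Primcodable α] (L : Set β)
    {plan : α → ℕ → List (ℕ × ℕ)} {ok : α → ℕ → Bool}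
    (hplan : Computable₂ plan) (hok : Computable₂ ok) {p : α → Prop}
    (hp : ∀ a, p a ↔ ∃ s, ok a s = true ∧ ∀ qe ∈ plan a s, obitB L qe.1 = qe.2) :
    RePredIn (charFun L) p := by
  classical
  -- the inner stopping function
  set g : (List (ℕ × ℕ) × ℕ) × ℕ → Bool := fun v =>
    decide (v.1.2 = v.1.1.length) || !(decide (v.2 = (v.1.1.getD v.1.2 (0, 0)).2)) with hgdef
  set pre : (α × ℕ) × ℕ → List (ℕ × ℕ) × ℕ := fun u => (plan u.1.1 u.1.2, u.2) with hpredef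
  set qf : List (ℕ × ℕ) × ℕ → ℕ := fun t => (t.1.getD t.2 (0, 0)).1 with hqfdef
  set stopB : (α × ℕ) × ℕ → Bool := fun u => g (pre u, obitB L (qf (pre u))) with hstopdef
  have hgc : Computable g := by
    have p1 : Primrec fun v : (List (ℕ × ℕ) × ℕ) × ℕ => decide (v.1.2 = v.1.1.length) :=
      (Primrec.eq.comp (Primrec.snd.comp Primrec.fst)
        (Primrec.list_length.comp (Primrec.fst.comp Primrec.fst))).decide
    have p2 : Primrec fun v : (List (ℕ × ℕ) × ℕ) × ℕ =>
        decide (v.2 = (v.1.1.getD v.1.2 (0, 0)).2) :=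
      (Primrec.eq.comp Primrec.snd
        (Primrec.snd.comp ((Primrec.list_getD (0, 0)).comp (Primrec.fst.comp Primrec.fst)
          (Primrec.snd.comp Primrec.fst)))).decide
    exact (Primrec.or.comp p1 (Primrec.not.comp p2)).to_comp
  have hprec : Computable pre :=
    Computable.pair
      (hplan.comp (Computable.fst.comp Computable.fst) (Computable.snd.comp Computable.fst))
      Computable.snd
  have hqfc : Computable qf :=
    Computable.fst.comp ((Primrec.list_getD (0, 0)).to_comp.comp Computable.fst Computable.snd)
  have hstopc : ComputableIn (charFun L) stopB := by
    have s2 : ComputableIn (charFun L) fun u => obitB L (qf (pre u)) :=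
      (computableIn_obitB L).comp (hqfc.comp hprec)
    have s3 : ComputableIn (charFun L) fun u => (pre u, obitB L (qf (pre u))) :=
      ComputableIn.pair (Computable.computableIn hprec) s2
    exact ComputableIn.comp' hgc s3
  -- inner rfind
  set pfun : (α × ℕ) → ℕ →. Bool := fun b m => Part.some (stopB (b, m)) with hpfundef
  have hpfun : PartrecIn₂ (charFun L) pfun := hstopc
  set innerRes : α × ℕ →. ℕ := fun b => Nat.rfind (pfun b) with hinnerdef
  have hinner : PartrecIn (charFun L) innerRes := PartrecIn.rfind hpfun
  have hstop_at_len : ∀ b : α × ℕ, stopB (b, (plan b.1 b.2).length) = true := by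
    intro b; simp [hstopdef, hgdef, hpredef]
  have hinner_dom : ∀ b : α × ℕ, (innerRes b).Dom := by
    intro b
    rw [hinnerdef]
    refine Nat.rfind_dom.2 ⟨(plan b.1 b.2).length, ?_, fun {_} _ => trivial⟩
    rw [hpfundef]
    exact Part.mem_some_iff.2 (hstop_at_len b).symm
  have hgood_iff : ∀ b : α × ℕ,
      ((plan b.1 b.2).length ∈ innerRes b ↔ ∀ qe ∈ plan b.1 b.2, obitB L qe.1 = qe.2) := by
    intro b
    rw [hinnerdef]
    constructor
    · intro hmem qe hqe
      obtain ⟨m, hm, hmv⟩ := List.mem_iff_getElem.1 hqe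
      have hfalse : false ∈ pfun b m := Nat.rfind_min hmem hm
      rw [hpfundef] at hfalse
      have hsf : stopB (b, m) = false := (Part.mem_some_iff.1 hfalse).symm
      rw [hstopdef, hgdef] at hsf
      simp only [hpredef, Bool.or_eq_false_iff, decide_eq_false_iff_not, Bool.not_eq_false',
        decide_eq_true_eq] at hsf
      have h2 := hsf.2
      simp only [hqfdef, List.getD_eq_getElem?_getD, List.getElem?_eq_getElem hm,
        Option.getD_some] at h2
      rw [← hmv]
      exact h2
    · intro hgood
      apply Nat.mem_rfind.2
      constructor
      · rw [hpfundef]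
        exact Part.mem_some_iff.2 (hstop_at_len b).symm
      · intro m hm
        have hne : ¬(m = (plan b.1 b.2).length) := by omega
        have hmemg : (plan b.1 b.2).getD m (0, 0) ∈ plan b.1 b.2 := by
          rw [List.getD_eq_getElem?_getD, List.getElem?_eq_getElem hm]
          exact List.getElem_mem hm
        have hq := hgood _ hmemg
        rw [hpfundef]
        apply Part.mem_some_iff.2
        rw [hstopdef, hgdef]
        rw [List.getD_eq_getElem?_getD] at hq
        simp [hpredef, hqfdef, hne, hq]
  -- outer rfind
  set okb : α → ℕ →. Bool := fun a s =>
    (innerRes (a, s)).map fun m => ok a s && decide (m = (plan a s).length) with hokbdef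
  have hokb : PartrecIn₂ (charFun L) okb := by
    have h2 : Computable₂ fun (q : α × ℕ) (m : ℕ) =>
        (ok q.1 q.2 && decide (m = (plan q.1 q.2).length)) := by
      have candOk : Computable fun v : (α × ℕ) × ℕ => ok v.1.1 v.1.2 :=
        hok.comp (Computable.fst.comp Computable.fst) (Computable.snd.comp Computable.fst)
      have candLen : Computable fun v : (α × ℕ) × ℕ => (plan v.1.1 v.1.2).length :=
        Primrec.list_length.to_comp.comp
          (hplan.comp (Computable.fst.comp Computable.fst) (Computable.snd.comp Computable.fst))
      have candEq : Computable fun v : (α × ℕ) × ℕ => decide (v.2 = (plan v.1.1 v.1.2).length) :=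
        (Primrec.eq.decide.to_comp (α := ℕ)).comp Computable.snd candLen
      exact (Primrec.and.to_comp).comp candOk candEq
    exact PartrecIn.map hinner h2
  set res : α →. ℕ := fun a => Nat.rfind (okb a) with hresdef
  have hres : PartrecIn (charFun L) res := PartrecIn.rfind hokb
  have hokb_total : ∀ a s, (okb a s).Dom := fun a s => hinner_dom (a, s)
  have hdom_iff : ∀ a, (res a).Dom ↔ p a := by
    intro a
    rw [hresdef]
    rw [Nat.rfind_dom]
    constructor
    · rintro ⟨s, hs, -⟩
      rw [hokbdef] at hs
      obtain ⟨m, hm, hmv⟩ := (Part.mem_map_iff _).1 hs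
      rw [Bool.and_eq_true] at hmv
      have hmlen : m = (plan a s).length := of_decide_eq_true hmv.2
      exact (hp a).2 ⟨s, hmv.1, (hgood_iff (a, s)).1 (hmlen ▸ hm)⟩
    · intro hpa
      obtain ⟨s, hok1, hgood⟩ := (hp a).1 hpa
      refine ⟨s, ?_, fun {m} _ => hokb_total a m⟩
      rw [hokbdef]
      apply (Part.mem_map_iff _).2
      exact ⟨(plan a s).length, (hgood_iff (a, s)).2 hgood, by simp [hok1]⟩
  have hfinal : PartrecIn (charFun L) fun a => (res a).map fun _ => () :=
    PartrecIn.map hres (Computable.const ())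
  unfold RePredIn
  apply hfinal.of_eq
  intro a
  apply Part.ext
  intro u
  simp only [Part.mem_map_iff, Part.mem_assert_iff, Part.mem_some_iff]
  constructor
  · rintro ⟨m, hm, -⟩
    exact ⟨(hdom_iff a).1 (Part.dom_iff_mem.2 ⟨m, hm⟩), trivial⟩
  · rintro ⟨hpa, -⟩
    obtain ⟨m, hm⟩ := Part.dom_iff_mem.1 ((hdom_iff a).2 hpa)
    exact ⟨m, hm, trivial⟩

end AuxMaster


/-! ### Concrete plan for the coding set -/

section AuxPlan

variable {k : ℕ}

def cw1 (c : PatternCoding k (Fin 3)) : List (Fin k) := (c.getD 0 ([], 1)).1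

def cw2 (c : PatternCoding k (Fin 3)) : List (Fin k) := (c.getD 1 ([], 1)).1

def shapeB (c : PatternCoding k (Fin 3)) : Bool := decide (c = [(cw1 c, 1), (cw2 c, 2)])

def dwordC (ι : Fin k → Fin k) (c : PatternCoding k (Fin 3)) : List (Fin k) :=
  invWord ι (cw1 c) ++ cw2 c

def qNat (ι : Fin k → Fin k) (c : PatternCoding k (Fin 3)) (w' : List (Fin k)) : ℕ :=
  Encodable.encode (invWord ι w' ++ dwordC ι c)

def t1C (n : ℕ) (ι : Fin k → Fin k) (c : PatternCoding k (Fin 3)) (j : ℕ) : ℕ :=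
  min (2 * mseq n j - (2 * n + 1)) (dwordC ι c).length

def t2C (n : ℕ) (ι : Fin k → Fin k) (c : PatternCoding k (Fin 3)) (j : ℕ) : ℕ :=
  min (2 * mseq n j) (dwordC ι c).length

def JC (n : ℕ) (ι : Fin k → Fin k) (c : PatternCoding k (Fin 3)) : ℕ :=
  (dwordC ι c).length + 2 * n + 2

def sigOf (k : ℕ) (s : ℕ) : List (Option (List (Fin k))) :=
  (Encodable.decode (α := List (Option (List (Fin k)))) s).getD []

def planC (n : ℕ) (ι : Fin k → Fin k) (c : PatternCoding k (Fin 3)) (s : ℕ) : List (ℕ × ℕ) :=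
  (List.range (JC n ι c)).flatMap fun j =>
    (((sigOf k s).getD j none).map fun w' => [(qNat ι c w', 1)]).getD
      ((wordsLe k (t2C n ι c j)).map fun w' => (qNat ι c w', 0))

def okC (n : ℕ) (ι : Fin k → Fin k) (c : PatternCoding k (Fin 3)) (s : ℕ) : Bool :=
  shapeB c && ((List.range (JC n ι c)).foldr (fun j acc =>
    ((((sigOf k s).getD j none).map fun w' => decide (w'.length ≤ t1C n ι c j)).getD true)
      && acc) true)

theorem foldr_and_eq_true {α : Type*} {l : List α} {f : α → Bool} :
    (l.foldr (fun j acc => f j && acc) true = true) ↔ ∀ j ∈ l, f j = true := by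
  induction l with
  | nil => simp
  | cons a l ih => simp [ih, Bool.and_eq_true]

theorem shapeB_iff {c : PatternCoding k (Fin 3)} :
    shapeB c = true ↔ ∃ w₁ w₂ : List (Fin k), c = [(w₁, (1 : Fin 3)), (w₂, 2)] := by
  constructor
  · intro h; exact ⟨cw1 c, cw2 c, of_decide_eq_true h⟩
  · rintro ⟨w₁, w₂, rfl⟩
    simp [shapeB, cw1, cw2]

theorem mem_CT_iff_plan {S : Fin k → G} (hw : ∀ g : G, ∃ w : List (Fin k), wordEval S w = g)
    {ι : Fin k → Fin k} (hι : ∀ i, S (ι i) = (S i)⁻¹) (n : ℕ) (c : PatternCoding k (Fin 3)) :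
    c ∈ CT S n ↔
      ∃ s, okC n ι c s = true ∧ ∀ qe ∈ planC n ι c s, obitB (WP S) qe.1 = qe.2 := by
  classical
  set W : List (Fin k) := dwordC ι c with hWdef
  set M : ℕ := W.length with hMdef
  set L : ℕ := wlen S (wordEval S W) with hLdef
  set J : ℕ := JC n ι c with hJdef
  have hLM : L ≤ M := wlen_le_of_eval rfl
  have hobit : ∀ w' : List (Fin k), obitB (WP S) (qNat ι c w') =
      if wordEval S w' = wordEval S W then 1 else 0 := by
    intro w'
    have hiff : ((invWord ι w' ++ W) ∈ WP S) ↔ wordEval S w' = wordEval S W := by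
      simp only [WP, Set.mem_setOf_eq, wordEval_append, wordEval_invWord hι]
      constructor
      · intro h
        exact inv_mul_eq_one.1 h
      · intro h
        rw [h]
        exact inv_mul_cancel _
    rw [qNat, obitB_encode]
    by_cases h : wordEval S w' = wordEval S W
    · rw [if_pos (hiff.2 h), if_pos h]
    · rw [if_neg (fun hc => h (hiff.1 hc)), if_neg h]
  have hLe_iff : ∀ t : ℕ, L ≤ min t M ↔
      ∃ w' ∈ wordsLe k (min t M), wordEval S w' = wordEval S W := by
    intro t
    constructor
    · intro h
      obtain ⟨w', hl, he⟩ := exists_word_wlen hw (wordEval S W)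
      exact ⟨w', mem_wordsLe.2 (hl.trans h), he⟩
    · rintro ⟨w', hm, he⟩
      exact (wlen_le_of_eval he).trans (mem_wordsLe.1 hm)
  have hT_iff : (wordEval S W ∉ Tset S n) ↔
      ∀ j < J, (L ≤ t1C n ι c j ∨ ¬ (L ≤ t2C n ι c j)) := by
    constructor
    · intro hT j _
      by_cases hb : L ≤ 2 * mseq n j
      · left
        have hnc : ¬(2 * mseq n j - 2 * n ≤ L) := fun hc => hT ⟨j, hc, hb⟩
        have hbase := mseq_base_le n j
        rw [t1C]
        have : L ≤ 2 * mseq n j - (2 * n + 1) := by omega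
        exact le_min this hLM
      · right
        intro hc
        exact hb (hc.trans (min_le_left _ _))
    · rintro hcond ⟨i, hi1, hi2⟩
      have hbase := mseq_base_le n i
      have hself := self_lt_mseq n i
      have hiJ : i < J := by
        rw [hJdef, JC, ← hWdef, ← hMdef]
        omega
      rcases hcond i hiJ with hcase | hcase
      · rw [t1C] at hcase
        have := min_le_left (2 * mseq n i - (2 * n + 1)) ((dwordC ι c).length)
        omega
      · apply hcase
        rw [t2C]
        exact le_min hi2 hLM
  by_cases hshape : shapeB c = true
  · obtain ⟨w₁, w₂, hc⟩ := shapeB_iff.1 hshape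
    have hcw1 : cw1 c = w₁ := by rw [hc]; rfl
    have hcw2 : cw2 c = w₂ := by rw [hc]; rfl
    have hWe : wordEval S W = (wordEval S w₁)⁻¹ * wordEval S w₂ := by
      rw [hWdef, dwordC, hcw1, hcw2, wordEval_append, wordEval_invWord hι]
    have hCT_iff : c ∈ CT S n ↔ wordEval S W ∉ Tset S n := by
      constructor
      · rintro ⟨w₁', w₂', hc', hT⟩
        rw [hc] at hc'
        have h1 : w₁ = w₁' ∧ w₂ = w₂' := by
          simp only [List.cons.injEq, Prod.mk.injEq, and_true, true_and] at hc'
          tauto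
        rw [hWe, h1.1, h1.2]
        exact hT
      · intro hT
        exact ⟨w₁, w₂, hc, by rw [← hWe]; exact hT⟩
    rw [hCT_iff, hT_iff]
    constructor
    · intro hcond
      set P : ℕ → Prop := fun j =>
        ∃ w', w' ∈ wordsLe k (t1C n ι c j) ∧ wordEval S w' = wordEval S W with hPdef
      set σ : List (Option (List (Fin k))) :=
        (List.range J).map (fun j => if h : P j then some (Classical.choose h) else none)
        with hσdef
      have hsig : sigOf k (Encodable.encode σ) = σ := by
        simp [sigOf, Encodable.encodek]
      have hσget : ∀ j < J, σ.getD j none =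
          if h : P j then some (Classical.choose h) else none := by
        intro j hj
        rw [hσdef, List.getD_eq_getElem?_getD, List.getElem?_map, List.getElem?_range hj]
        rfl
      refine ⟨Encodable.encode σ, ?_, ?_⟩
      · rw [okC, Bool.and_eq_true]
        refine ⟨hshape, foldr_and_eq_true.2 fun j hj => ?_⟩
        have hjJ : j < JC n ι c := List.mem_range.1 hj
        rw [hsig, hσget j (by rw [hJdef]; exact hjJ)]
        by_cases h : P j
        · rw [dif_pos h]
          simp only [Option.map_some, Option.getD_some, decide_eq_true_eq]
          exact mem_wordsLe.1 (Classical.choose_spec h).1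
        · rw [dif_neg h]
          rfl
      · intro qe hqe
        rw [planC] at hqe
        rw [hsig] at hqe
        obtain ⟨j, hjmem, hqe'⟩ := List.mem_flatMap.1 hqe
        have hj : j < J := by rw [hJdef]; exact List.mem_range.1 hjmem
        rw [hσget j hj] at hqe'
        by_cases h : P j
        · rw [dif_pos h] at hqe'
          simp only [Option.map_some, Option.getD_some, List.mem_singleton] at hqe'
          rw [hqe']
          simp only
          rw [hobit, if_pos (Classical.choose_spec h).2]
        · rw [dif_neg h] at hqe'
          simp only [Option.map_none, Option.getD_none, List.mem_map] at hqe'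
          obtain ⟨w', hw', rfl⟩ := hqe'
          simp only
          rw [hobit, if_neg]
          intro he
          rcases hcond j hj with hcase | hcase
          · apply h
            obtain ⟨w'', hl'', he''⟩ := exists_word_wlen hw (wordEval S W)
            have ht1 : L ≤ t1C n ι c j := hcase
            exact ⟨w'', mem_wordsLe.2 (hl''.trans ht1), he''⟩
          · apply hcase
            have := wlen_le_of_eval he
            exact this.trans (mem_wordsLe.1 hw')
    · rintro ⟨s, hok, hplan⟩ j hj
      rw [okC, Bool.and_eq_true] at hok
      have hfold := foldr_and_eq_true.1 hok.2
      rcases ho : (sigOf k s).getD j none with _ | w'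
      · -- none : negative queries
        right
        intro hLe
        obtain ⟨w', hl, he⟩ := exists_word_wlen hw (wordEval S W)
        have hmem : w' ∈ wordsLe k (t2C n ι c j) := mem_wordsLe.2 (hl.trans hLe)
        have hq : (qNat ι c w', 0) ∈ planC n ι c s := by
          rw [planC]
          refine List.mem_flatMap.2 ⟨j, List.mem_range.2 (by rw [← hJdef]; exact hj), ?_⟩
          rw [ho]
          simp only [Option.map_none, Option.getD_none, List.mem_map]
          exact ⟨w', hmem, rfl⟩
        have hb := hplan _ hq
        simp only at hb
        rw [hobit, if_pos he] at hb
        exact absurd hb one_ne_zero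
      · -- some w' : positive query
        left
        have hlen : w'.length ≤ t1C n ι c j := by
          have := hfold j (List.mem_range.2 (by rw [← hJdef]; exact hj))
          rw [ho] at this
          simpa using this
        have hq : (qNat ι c w', 1) ∈ planC n ι c s := by
          rw [planC]
          refine List.mem_flatMap.2 ⟨j, List.mem_range.2 (by rw [← hJdef]; exact hj), ?_⟩
          rw [ho]
          simp
        have hb := hplan _ hq
        simp only at hb
        rw [hobit] at hb
        by_cases he : wordEval S w' = wordEval S W
        · exact (wlen_le_of_eval he).trans hlen
        · rw [if_neg he] at hb
          exact absurd hb zero_ne_one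
  · constructor
    · rintro ⟨w₁, w₂, hc, -⟩
      exact absurd (shapeB_iff.2 ⟨w₁, w₂, hc⟩) hshape
    · rintro ⟨s, hok, -⟩
      rw [okC, Bool.and_eq_true] at hok
      exact absurd hok.1 hshape

end AuxPlan


/-! ### Computability of the plan -/

section AuxComput

variable {k : ℕ}

theorem wordsE_primrec : Primrec (wordsE k) := by
  have hcons : Primrec₂ fun (q : (ℕ × List (List (Fin k))) × List (Fin k)) (i : Fin k) =>
      i :: q.2 :=
    Primrec.list_cons.comp Primrec.snd (Primrec.snd.comp Primrec.fst)
  have hg : Primrec₂ fun (_ : ℕ × List (List (Fin k))) (w : List (Fin k)) =>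
      (List.finRange k).map fun i => i :: w :=
    Primrec.list_map (Primrec.const (List.finRange k)) hcons
  have hstep : Primrec₂ fun (_ : ℕ) (ih : List (List (Fin k))) =>
      ih.flatMap fun w => (List.finRange k).map fun i => i :: w :=
    Primrec.list_flatMap Primrec.snd hg
  have h := Primrec.nat_rec₁ ([[]] : List (List (Fin k))) hstep
  exact h.of_eq fun t => by
    induction t with
    | zero => rfl
    | succ t ih => simp only [wordsE, ← ih]

theorem wordsLe_primrec : Primrec (wordsLe k) := by
  have hstep : Primrec₂ fun (t : ℕ) (ih : List (List (Fin k))) => ih ++ wordsE k (t + 1) :=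
    Primrec.list_append.comp Primrec.snd
      (wordsE_primrec.comp (Primrec.succ.comp Primrec.fst))
  have h := Primrec.nat_rec₁ ([[]] : List (List (Fin k))) hstep
  exact h.of_eq fun t => by
    induction t with
    | zero => rfl
    | succ t ih => simp only [wordsLe, ← ih]

theorem mseq_primrec (n : ℕ) : Primrec (mseq n) := by
  have hstep : Primrec fun p : ℕ × ℕ => 3 * p.2 :=
    Primrec.nat_mul.comp (Primrec.const 3) Primrec.snd
  have hstep2 : Primrec₂ fun (_ : ℕ) (ih : ℕ) => 3 * ih := hstep
  have h := Primrec.nat_rec₁ (2 * n + 2) hstep2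
  exact h.of_eq fun j => rfl

theorem cw1_primrec : Primrec (cw1 (k := k)) :=
  Primrec.fst.comp ((Primrec.list_getD (([], 1) : List (Fin k) × Fin 3)).comp Primrec.id
    (Primrec.const 0))

theorem cw2_primrec : Primrec (cw2 (k := k)) :=
  Primrec.fst.comp ((Primrec.list_getD (([], 1) : List (Fin k) × Fin 3)).comp Primrec.id
    (Primrec.const 1))

theorem invWord_primrec (ι : Fin k → Fin k) : Primrec (invWord ι) :=
  Primrec.list_reverse.comp
    (Primrec.list_map Primrec.id ((Primrec.dom_finite ι).comp Primrec.snd))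

theorem dwordC_primrec (ι : Fin k → Fin k) : Primrec (dwordC ι) :=
  Primrec.list_append.comp ((invWord_primrec ι).comp cw1_primrec) cw2_primrec

theorem shapeB_primrec : Primrec (shapeB (k := k)) := by
  have hc : Primrec fun c : PatternCoding k (Fin 3) =>
      [(cw1 c, (1 : Fin 3)), (cw2 c, (2 : Fin 3))] :=
    Primrec.list_cons.comp (Primrec.pair cw1_primrec (Primrec.const 1))
      (Primrec.list_cons.comp (Primrec.pair cw2_primrec (Primrec.const 2))
        (Primrec.const []))
  exact (Primrec.eq.comp Primrec.id hc).decide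

theorem qNat_primrec (ι : Fin k → Fin k) :
    Primrec₂ fun (c : PatternCoding k (Fin 3)) (w' : List (Fin k)) => qNat ι c w' :=
  Primrec.encode.comp (Primrec.list_append.comp ((invWord_primrec ι).comp Primrec.snd)
    ((dwordC_primrec ι).comp Primrec.fst))

theorem sigOf_primrec : Primrec (sigOf k) :=
  Primrec.option_getD.comp Primrec.decode (Primrec.const [])

theorem JC_primrec (n : ℕ) (ι : Fin k → Fin k) : Primrec (JC n ι) :=
  Primrec.nat_add.comp
    (Primrec.nat_add.comp (Primrec.list_length.comp (dwordC_primrec ι))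
      (Primrec.const (2 * n)))
    (Primrec.const 2)

theorem planC_primrec (n : ℕ) (ι : Fin k → Fin k) : Primrec₂ (planC n ι) := by
  -- over v : PatternCoding k (Fin 3) × ℕ, then j : ℕ
  have hrange : Primrec fun v : PatternCoding k (Fin 3) × ℕ => List.range (JC n ι v.1) :=
    Primrec.list_range.comp ((JC_primrec n ι).comp Primrec.fst)
  -- branch as a function of u : (PatternCoding k (Fin 3) × ℕ) × ℕ
  have hsigget : Primrec fun u : (PatternCoding k (Fin 3) × ℕ) × ℕ =>
      (sigOf k u.1.2).getD u.2 none :=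
    (Primrec.list_getD none).comp (sigOf_primrec.comp (Primrec.snd.comp Primrec.fst))
      Primrec.snd
  have hinner1 : Primrec₂ fun (u : (PatternCoding k (Fin 3) × ℕ) × ℕ) (w' : List (Fin k)) =>
      [(qNat ι u.1.1 w', 1)] :=
    Primrec.list_cons.comp
      (Primrec.pair ((qNat_primrec ι).comp (Primrec.fst.comp (Primrec.fst.comp Primrec.fst))
        Primrec.snd) (Primrec.const 1))
      (Primrec.const [])
  have ht2 : Primrec fun u : (PatternCoding k (Fin 3) × ℕ) × ℕ => t2C n ι u.1.1 u.2 :=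
    Primrec.nat_min.comp
      (Primrec.nat_mul.comp (Primrec.const 2) ((mseq_primrec n).comp Primrec.snd))
      (Primrec.list_length.comp ((dwordC_primrec ι).comp (Primrec.fst.comp Primrec.fst)))
  have helse : Primrec fun u : (PatternCoding k (Fin 3) × ℕ) × ℕ =>
      (wordsLe k (t2C n ι u.1.1 u.2)).map fun w' => (qNat ι u.1.1 w', 0) :=
    Primrec.list_map (wordsLe_primrec.comp ht2)
      (Primrec.pair ((qNat_primrec ι).comp (Primrec.fst.comp (Primrec.fst.comp Primrec.fst))
        Primrec.snd) (Primrec.const 0))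
  have hbranch : Primrec₂ fun (v : PatternCoding k (Fin 3) × ℕ) (j : ℕ) =>
      (((sigOf k v.2).getD j none).map fun w' => [(qNat ι v.1 w', 1)]).getD
        ((wordsLe k (t2C n ι v.1 j)).map fun w' => (qNat ι v.1 w', 0)) :=
    Primrec.option_getD.comp (Primrec.option_map hsigget hinner1) helse
  exact Primrec.list_flatMap hrange hbranch

theorem okC_primrec (n : ℕ) (ι : Fin k → Fin k) : Primrec₂ (okC n ι) := by
  have hrange : Primrec fun v : PatternCoding k (Fin 3) × ℕ => List.range (JC n ι v.1) :=
    Primrec.list_range.comp ((JC_primrec n ι).comp Primrec.fst)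
  -- inner as function of r : (PatternCoding k (Fin 3) × ℕ) × (ℕ × Bool)
  have hsigget : Primrec fun r : (PatternCoding k (Fin 3) × ℕ) × (ℕ × Bool) =>
      (sigOf k r.1.2).getD r.2.1 none :=
    (Primrec.list_getD none).comp (sigOf_primrec.comp (Primrec.snd.comp Primrec.fst))
      (Primrec.fst.comp Primrec.snd)
  have ht1 : Primrec fun r : (PatternCoding k (Fin 3) × ℕ) × (ℕ × Bool) =>
      t1C n ι r.1.1 r.2.1 :=
    Primrec.nat_min.comp
      (Primrec.nat_sub.comp
        (Primrec.nat_mul.comp (Primrec.const 2)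
          ((mseq_primrec n).comp (Primrec.fst.comp Primrec.snd)))
        (Primrec.const (2 * n + 1)))
      (Primrec.list_length.comp ((dwordC_primrec ι).comp (Primrec.fst.comp Primrec.fst)))
  have hdec : Primrec₂ fun (r : (PatternCoding k (Fin 3) × ℕ) × (ℕ × Bool))
      (w' : List (Fin k)) => decide (w'.length ≤ t1C n ι r.1.1 r.2.1) :=
    (Primrec.nat_le.comp (Primrec.list_length.comp Primrec.snd) (ht1.comp Primrec.fst)).decide
  have hinner : Primrec fun r : (PatternCoding k (Fin 3) × ℕ) × (ℕ × Bool) =>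
      (((sigOf k r.1.2).getD r.2.1 none).map fun w' =>
        decide (w'.length ≤ t1C n ι r.1.1 r.2.1)).getD true :=
    Primrec.option_getD.comp (Primrec.option_map hsigget hdec) (Primrec.const true)
  have hh : Primrec₂ fun (v : PatternCoding k (Fin 3) × ℕ) (p : ℕ × Bool) =>
      (((((sigOf k v.2).getD p.1 none).map fun w' =>
        decide (w'.length ≤ t1C n ι v.1 p.1)).getD true) && p.2) :=
    Primrec.and.comp hinner (Primrec.snd.comp Primrec.snd)
  have hfold : Primrec fun v : PatternCoding k (Fin 3) × ℕ =>
      (List.range (JC n ι v.1)).foldr (fun j acc =>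
        ((((sigOf k v.2).getD j none).map fun w' =>
          decide (w'.length ≤ t1C n ι v.1 j)).getD true) && acc) true :=
    Primrec.list_foldr hrange (Primrec.const true) hh
  exact Primrec.and.comp (shapeB_primrec.comp Primrec.fst) hfold

theorem CT_rePredIn {S : Fin k → G} (hw : ∀ g : G, ∃ w : List (Fin k), wordEval S w = g)
    {ι : Fin k → Fin k} (hι : ∀ i, S (ι i) = (S i)⁻¹) (n : ℕ) :
    RePredIn (charFun (WP S)) (· ∈ CT S n) :=
  rePredIn_of_plan (WP S) (planC_primrec n ι).to_comp (okC_primrec n ι).to_comp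
    (mem_CT_iff_plan hw hι n)

end AuxComput


/-! ### Non-soficity -/

section AuxNonSofic

variable {k : ℕ}

theorem crossing_wlen {S : Fin k → G} (hw : ∀ g : G, ∃ w : List (Fin k), wordEval S w = g)
    {ι : Fin k → Fin k} (hι : ∀ i, S (ι i) = (S i)⁻¹) {n : ℕ} {x y aa bb : G}
    (hxy : ¬ Reach S (ballS S n)ᶜ x y)
    (ha : Reach S (ballS S n)ᶜ x aa) (hb : Reach S (ballS S n)ᶜ y bb) :
    wlen S aa + wlen S bb ≤ 2 * n + wlen S (aa⁻¹ * bb) := by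
  obtain ⟨w, hlw, hew⟩ := exists_word_wlen hw (aa⁻¹ * bb)
  by_cases hall : ∀ t ≤ w.length, aa * wordEval S (w.take t) ∉ ballS S n
  · exfalso
    have hreach : Reach S (ballS S n)ᶜ aa bb := by
      have := reach_of_prefixes hall
      rwa [hew, mul_inv_cancel_left] at this
    exact hxy (reach_trans (reach_trans ha hreach) (reach_symm hι hb))
  · push_neg at hall
    obtain ⟨t, ht, hmem⟩ := hall
    obtain ⟨wp, hlp, hep⟩ := hmem
    have h1 : wlen S aa ≤ n + t := by
      have : wordEval S (wp ++ invWord ι (w.take t)) = aa := by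
        rw [wordEval_append, hep, wordEval_invWord hι]; group
      have hle := wlen_le_of_eval (S := S) this
      have hlt : (w.take t).length ≤ t := by simp [List.length_take]
      simp only [List.length_append, invWord_length] at hle
      omega
    have h2 : wlen S bb ≤ n + (w.length - t) := by
      have : wordEval S (wp ++ w.drop t) = bb := by
        rw [wordEval_append, hep, mul_assoc, ← wordEval_append, List.take_append_drop, hew,
          mul_inv_cancel_left]
      have hle := wlen_le_of_eval (S := S) this
      have hdl : (w.drop t).length = w.length - t := by simp
      simp only [List.length_append, hdl] at hle
      omega
    omega

theorem XT_not_sofic {S : Fin k → G}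
    (hw : ∀ g : G, ∃ w : List (Fin k), wordEval S w = g)
    {ι : Fin k → Fin k} (hι : ∀ i, S (ι i) = (S i)⁻¹)
    {n : ℕ} {x y : G} (hx : x ∉ ballS S n) (hy : y ∉ ballS S n)
    (hxI : {z | Reach S (ballS S n)ᶜ x z}.Infinite)
    (hyI : {z | Reach S (ballS S n)ᶜ y z}.Infinite)
    (hxy : ¬ Reach S (ballS S n)ᶜ x y) :
    ¬ IsSofic (XT S n) := by
  rintro ⟨V⟩
  classical
  obtain ⟨Fs, hFsFin, hYpat⟩ := V.sft
  haveI hBfin := V.finB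
  letI : TopologicalSpace V.B := ⊥
  letI : TopologicalSpace (Fin 3) := ⊥
  haveI : DiscreteTopology V.B := ⟨rfl⟩
  haveI : DiscreteTopology (Fin 3) := ⟨rfl⟩
  haveI : Finite V.B := Finite.of_fintype V.B
  have hYclosed : IsClosed V.Y := V.subY.1
  have hYcomp : IsCompact V.Y := hYclosed.isCompact
  have hcont : ContinuousOn V.phi V.Y := V.cont
  -- SFT radius
  obtain ⟨r, hr⟩ : ∃ r, ∀ p ∈ Fs, ∀ h ∈ p.supp, wlen S h ≤ r := by
    have hU : (⋃ p ∈ Fs, (p.supp : Set G)).Finite :=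
      hFsFin.biUnion fun p _ => p.supp.finite_toSet
    refine ⟨hU.toFinset.sup (wlen S), fun p hp h hh => ?_⟩
    apply Finset.le_sup (f := wlen S)
    rw [Set.Finite.mem_toFinset]
    exact Set.mem_biUnion hp hh
  -- determining window
  obtain ⟨F, hF⟩ : ∃ F : Finset G, ∀ y₁ y₂, y₁ ∈ V.Y → y₂ ∈ V.Y →
      (∀ f ∈ F, y₁ f = y₂ f) → V.phi y₁ 1 = V.phi y₂ 1 := by
    have hcont1 : ContinuousOn (fun z => V.phi z 1) V.Y :=
      (continuous_apply (1 : G)).comp_continuousOn hcont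
    have hloc : ∀ yy : {w // w ∈ V.Y}, ∃ I : Finset G,
        ∀ z ∈ V.Y, (∀ i ∈ I, z i = yy.1 i) → V.phi z 1 = V.phi yy.1 1 := by
      rintro ⟨yy, hyy⟩
      have hw1 : ContinuousWithinAt (fun z => V.phi z 1) V.Y yy :=
        hcont1.continuousWithinAt hyy
      have hpre : (fun z => V.phi z 1) ⁻¹' {V.phi yy 1} ∈ nhdsWithin yy V.Y :=
        hw1 ((isOpen_discrete _).mem_nhds rfl)
      obtain ⟨U, hUopen, hyyU, hUsub⟩ := mem_nhdsWithin.1 hpre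
      obtain ⟨I, u, hu, hsub⟩ := isOpen_pi_iff.1 hUopen yy hyyU
      refine ⟨I, fun z hz hagree => ?_⟩
      have hzU : z ∈ U := hsub fun i hi => by
        rw [hagree i hi]; exact (hu i hi).2
      exact hUsub ⟨hzU, hz⟩
    choose I hI using hloc
    have hopen : ∀ yy : {w // w ∈ V.Y}, IsOpen {z : G → V.B | ∀ i ∈ I yy, z i = yy.1 i} := by
      intro yy
      have : {z : G → V.B | ∀ i ∈ I yy, z i = yy.1 i} =
          Set.pi (I yy : Set G) fun i => {yy.1 i} := by
        ext; simp [Set.mem_pi]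
      rw [this]
      exact isOpen_set_pi (I yy).finite_toSet fun i _ => isOpen_discrete _
    have hcover : V.Y ⊆ ⋃ yy : {w // w ∈ V.Y}, {z : G → V.B | ∀ i ∈ I yy, z i = yy.1 i} :=
      fun z hz => Set.mem_iUnion.2 ⟨⟨z, hz⟩, fun i _ => rfl⟩
    obtain ⟨t, ht⟩ := hYcomp.elim_finite_subcover _ hopen hcover
    refine ⟨t.sup I, fun y₁ y₂ h1 h2 hag => ?_⟩
    obtain ⟨yy, hyyt, hyy1⟩ := Set.mem_iUnion₂.1 (ht h1)
    have e1 := hI yy y₁ h1 hyy1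
    have e2 := hI yy y₂ h2 fun i hi => by
      rw [← hag i (Finset.mem_sup.2 ⟨yy, hyyt, hi⟩)]; exact hyy1 i hi
    rw [e1, e2]
  -- window radius
  set ρ := F.sup (wlen S) with hρdef
  have hρ : ∀ f ∈ F, wlen S f ≤ ρ := fun f hf => Finset.le_sup hf
  -- shift lemma
  have hshift : ∀ yy ∈ V.Y, ∀ a : G,
      (fun h => yy (a * h)) ∈ V.Y ∧ V.phi yy a = V.phi (fun h => yy (a * h)) 1 := by
    intro yy hyy a
    have hmem : (fun h => yy ((a⁻¹)⁻¹ * h)) ∈ V.Y := V.subY.2 yy hyy a⁻¹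
    have heq := V.equiv yy hyy a⁻¹
    constructor
    · simpa [inv_inv] using hmem
    · have := congrFun heq 1
      simp only [inv_inv, mul_one] at this
      exact this.symm
  -- determining corollary
  have hdet : ∀ y₁ y₂, y₁ ∈ V.Y → y₂ ∈ V.Y → ∀ a : G,
      (∀ f ∈ F, y₁ (a * f) = y₂ (a * f)) → V.phi y₁ a = V.phi y₂ a := by
    intro y₁ y₂ h1 h2 a hag
    obtain ⟨hm1, he1⟩ := hshift y₁ h1 a
    obtain ⟨hm2, he2⟩ := hshift y₂ h2 a
    rw [he1, he2]
    exact hF _ _ hm1 hm2 fun f hf => hag f hf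
  -- components
  set C1 := {z | Reach S (ballS S n)ᶜ x z} with hC1def
  set C2 := {z | Reach S (ballS S n)ᶜ y z} with hC2def
  have hdisj : ∀ z, z ∈ C1 → z ∈ C2 → False := fun z h1 h2 =>
    hxy (reach_trans h1 (reach_symm hι h2))
  have hC1ball : ∀ z ∈ C1, z ∉ ballS S n := fun z hz => by
    have := reach_mem (show x ∈ (ballS S n)ᶜ from hx) hz
    exact this
  have hC2ball : ∀ z ∈ C2, z ∉ ballS S n := fun z hz => by
    have := reach_mem (show y ∈ (ballS S n)ᶜ from hy) hz
    exact this
  -- selection of far points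
  have hsel : ∀ jj : ℕ, ∃ ab : G × G, wlen S x + wlen S y ≤ jj →
      ab.1 ∈ C1 ∧ wlen S ab.1 = mseq n jj ∧ ab.2 ∈ C2 ∧ wlen S ab.2 = mseq n jj := by
    intro jj
    by_cases hjj : wlen S x + wlen S y ≤ jj
    · have hmj : jj ≤ mseq n jj := le_of_lt (self_lt_mseq n jj)
      obtain ⟨u, hu, hum⟩ := exists_wlen_ge (S := S) hw hxI (mseq n jj)
      obtain ⟨aa, haa, haal⟩ := exists_wlen_eq hw hι hu (by omega) hum
      obtain ⟨u', hu', hum'⟩ := exists_wlen_ge (S := S) hw hyI (mseq n jj)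
      obtain ⟨bb, hbb, hbbl⟩ := exists_wlen_eq hw hι hu' (by omega) hum'
      exact ⟨(aa, bb), fun _ => ⟨haa, haal, hbb, hbbl⟩⟩
    · exact ⟨(1, 1), fun h => absurd h hjj⟩
  choose ab hab using hsel
  -- the configurations
  set xconf : ℕ → G → Fin 3 := fun jj g =>
    if g = (ab jj).1 then 1 else if g = (ab jj).2 then 2 else 0 with hxconfdef
  have hne12 : (1 : Fin 3) ≠ 2 := by decide
  have hne10 : (0 : Fin 3) ≠ 1 := by decide
  have hne20 : (0 : Fin 3) ≠ 2 := by decide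
  have habne : ∀ jj, wlen S x + wlen S y ≤ jj → (ab jj).1 ≠ (ab jj).2 := by
    intro jj hjj he
    obtain ⟨h1, _, h2, _⟩ := hab jj hjj
    exact hdisj _ h1 (he ▸ h2)
  have hxval : ∀ jj, wlen S x + wlen S y ≤ jj →
      xconf jj (ab jj).1 = 1 ∧ xconf jj (ab jj).2 = 2 := by
    intro jj hjj
    constructor
    · simp [hxconfdef]
    · simp [hxconfdef, (habne jj hjj).symm]
  have hdiag : ∀ jj, wlen S x + wlen S y ≤ jj →
      2 * mseq n jj - 2 * n ≤ wlen S ((ab jj).1⁻¹ * (ab jj).2) ∧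
      wlen S ((ab jj).1⁻¹ * (ab jj).2) ≤ 2 * mseq n jj := by
    intro jj hjj
    obtain ⟨h1, hl1, h2, hl2⟩ := hab jj hjj
    constructor
    · have := crossing_wlen hw hι hxy h1 h2
      omega
    · calc wlen S ((ab jj).1⁻¹ * (ab jj).2) ≤ wlen S (ab jj).1⁻¹ + wlen S (ab jj).2 :=
          wlen_mul_le hw _ _
        _ ≤ 2 * mseq n jj := by
            have := wlen_inv_le hw hι (ab jj).1
            omega
  have hxconfX : ∀ jj, wlen S x + wlen S y ≤ jj → xconf jj ∈ XT S n := by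
    intro jj hjj u v h1 h2
    obtain ⟨hc1, hc2⟩ := hdiag jj hjj
    have hu : u = (ab jj).1 := by
      by_contra hne
      by_cases hv : u = (ab jj).2
      · rw [hxconfdef] at h1; simp only [if_neg hne, if_pos hv] at h1
        exact hne12 (by rw [← h1])
      · rw [hxconfdef] at h1; simp only [if_neg hne, if_neg hv] at h1
        exact hne10 h1
    have hv : v = (ab jj).2 := by
      by_contra hne
      by_cases hu' : v = (ab jj).1
      · rw [hxconfdef] at h2; simp only [if_pos hu'] at h2
        exact hne12 h2
      · rw [hxconfdef] at h2; simp only [if_neg hu', if_neg hne] at h2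
        exact hne20 h2
    rw [hu, hv]
    exact diag_mem_Tset hc1 hc2
  -- preimages
  obtain ⟨y0, hy00, -⟩ : ∃ y0 ∈ V.Y, V.phi y0 = xconf (wlen S x + wlen S y) := by
    have : xconf (wlen S x + wlen S y) ∈ V.phi '' V.Y :=
      V.image.symm ▸ hxconfX (wlen S x + wlen S y) le_rfl
    obtain ⟨y0, h1, h2⟩ := this
    exact ⟨y0, h1, h2⟩
  have hysel : ∀ jj : ℕ, ∃ yc : G → V.B, wlen S x + wlen S y ≤ jj →
      yc ∈ V.Y ∧ V.phi yc = xconf jj := by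
    intro jj
    by_cases hjj : wlen S x + wlen S y ≤ jj
    · have : xconf jj ∈ V.phi '' V.Y := V.image.symm ▸ hxconfX jj hjj
      obtain ⟨yc, hyc1, hyc2⟩ := this
      exact ⟨yc, fun _ => ⟨hyc1, hyc2⟩⟩
    · exact ⟨y0, fun h => absurd h hjj⟩
  choose yc hyc using hysel
  -- pigeonhole
  set R := n + 2 * r + ρ with hRdef
  have hKfin := ballS_finite S R
  have hpig : ∃ j ∈ {jj : ℕ | wlen S x + wlen S y ≤ jj},
      ∃ j' ∈ {jj : ℕ | wlen S x + wlen S y ≤ jj}, j ≠ j' ∧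
      (fun (g : hKfin.toFinset) => yc j g.1) = fun (g : hKfin.toFinset) => yc j' g.1 := by
    have hinf : {jj : ℕ | wlen S x + wlen S y ≤ jj}.Infinite := by
      have : {jj : ℕ | wlen S x + wlen S y ≤ jj} = Set.Ici (wlen S x + wlen S y) := rfl
      rw [this]; exact Set.Ici_infinite _
    exact hinf.exists_ne_map_eq_of_mapsTo (Set.mapsTo_univ _ _) Set.finite_univ
  obtain ⟨j, hj, j', hj', hjne, hjeq⟩ := hpig
  simp only [Set.mem_setOf_eq] at hj hj'
  have hagreeK : ∀ g ∈ ballS S R, yc j g = yc j' g := fun g hg =>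
    congrFun hjeq ⟨g, hKfin.mem_toFinset.2 hg⟩
  obtain ⟨hYj, hPj⟩ := hyc j hj
  obtain ⟨hYj', hPj'⟩ := hyc j' hj'
  -- gluing
  set z : G → V.B := fun g =>
    if Reach S (ballS S n)ᶜ x g ∧ g ∉ ballS S R then yc j g else yc j' g with hzdef
  have hz1 : ∀ g, (g ∈ C1 ∨ g ∈ ballS S R) → z g = yc j g := by
    intro g hg
    by_cases hcond : Reach S (ballS S n)ᶜ x g ∧ g ∉ ballS S R
    · simp [hzdef, hcond]
    · rw [hzdef]
      simp only [if_neg hcond]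
      rcases hg with hg | hg
      · rcases not_and_or.1 hcond with hbad | hK
        · exact absurd hg hbad
        · rw [not_not] at hK; exact (hagreeK g hK).symm
      · exact (hagreeK g hg).symm
  have hz2 : ∀ g, (g ∉ C1 ∨ g ∈ ballS S R) → z g = yc j' g := by
    intro g hg
    by_cases hcond : Reach S (ballS S n)ᶜ x g ∧ g ∉ ballS S R
    · exfalso
      rcases hg with hg | hg
      · exact hg hcond.1
      · exact hcond.2 hg
    · simp [hzdef, hcond]
  -- z is in Y
  have hzY : z ∈ V.Y := by
    rw [hYpat]
    rintro ⟨g, p, hpFs, hocc⟩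
    by_cases hcase : ∃ h1, ∃ _ : h1 ∈ p.supp, g * h1 ∈ C1 ∧ g * h1 ∉ ballS S R
    · obtain ⟨h1, hh1, hu1, hu2⟩ := hcase
      have hall : ∀ h ∈ p.supp, z (g * h) = yc j (g * h) := by
        intro h2 hh2
        apply hz1
        have hdist : wlen S ((g * h1)⁻¹ * (g * h2)) ≤ 2 * r := by
          have hgr : (g * h1)⁻¹ * (g * h2) = h1⁻¹ * h2 := by group
          rw [hgr]
          have i1 := wlen_inv_le hw hι h1
          have i2 := hr p hpFs h1 hh1
          have i3 := hr p hpFs h2 hh2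
          have i4 := wlen_mul_le hw h1⁻¹ h2
          omega
        have hu_nball : g * h1 ∉ ballS S n := fun hmem =>
          hu2 (ballS_mono (by omega) hmem)
        rcases reach_or_ball hw hι hu_nball hdist with hreach | ⟨hb1, _⟩
        · exact Or.inl (reach_trans hu1 hreach)
        · exact absurd (ballS_mono (by omega) hb1) hu2
      have hYj2 : yc j ∈ XPat Fs := by rw [← hYpat]; exact hYj
      exact hYj2 ⟨g, p, hpFs, fun h hh => by rw [← hall h hh]; exact hocc h hh⟩
    · push_neg at hcase
      have hall : ∀ h ∈ p.supp, z (g * h) = yc j' (g * h) := by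
        intro h2 hh2
        apply hz2
        by_cases hK : g * h2 ∈ ballS S R
        · exact Or.inr hK
        · exact Or.inl fun hC => hK (hcase h2 hh2 hC)
      have hYj2 : yc j' ∈ XPat Fs := by rw [← hYpat]; exact hYj'
      exact hYj2 ⟨g, p, hpFs, fun h hh => by rw [← hall h hh]; exact hocc h hh⟩
  -- phi values at the two markers
  have haj : (ab j).1 ∈ C1 := (hab j hj).1
  have hbj' : (ab j').2 ∈ C2 := (hab j' hj').2.2.1
  have hajl : wlen S (ab j).1 = mseq n j := (hab j hj).2.1
  have hbj'l : wlen S (ab j').2 = mseq n j' := (hab j' hj').2.2.2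
  have hajn : (ab j).1 ∉ ballS S n := hC1ball _ haj
  have hbj'n : (ab j').2 ∉ ballS S n := hC2ball _ hbj'
  have hphi1 : V.phi z (ab j).1 = 1 := by
    have hag : ∀ f ∈ F, z ((ab j).1 * f) = yc j ((ab j).1 * f) := by
      intro f hf
      apply hz1
      have hdist : wlen S (((ab j).1)⁻¹ * ((ab j).1 * f)) ≤ ρ := by
        rw [inv_mul_cancel_left]; exact hρ f hf
      rcases reach_or_ball hw hι hajn hdist with hreach | ⟨_, hb2⟩
      · exact Or.inl (reach_trans haj hreach)
      · exact Or.inr (ballS_mono (by omega) hb2)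
    have := hdet z (yc j) hzY hYj (ab j).1 hag
    rw [this, hPj]
    exact (hxval j hj).1
  have hphi2 : V.phi z (ab j').2 = 2 := by
    have hag : ∀ f ∈ F, z ((ab j').2 * f) = yc j' ((ab j').2 * f) := by
      intro f hf
      apply hz2
      have hdist : wlen S (((ab j').2)⁻¹ * ((ab j').2 * f)) ≤ ρ := by
        rw [inv_mul_cancel_left]; exact hρ f hf
      rcases reach_or_ball hw hι hbj'n hdist with hreach | ⟨_, hb2⟩
      · exact Or.inl fun hC => hdisj _ hC (reach_trans hbj' hreach)
      · exact Or.inr (ballS_mono (by omega) hb2)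
    have := hdet z (yc j') hzY hYj' (ab j').2 hag
    rw [this, hPj']
    exact (hxval j' hj').2
  -- contradiction
  have hphiX : V.phi z ∈ XT S n := by
    have hmem : V.phi z ∈ V.phi '' V.Y := Set.mem_image_of_mem _ hzY
    rwa [V.image] at hmem
  have hmemT := hphiX _ _ hphi1 hphi2
  have hupper : wlen S (((ab j).1)⁻¹ * (ab j').2) ≤ mseq n j + mseq n j' := by
    have i1 := wlen_inv_le hw hι (ab j).1
    have i2 := wlen_mul_le hw ((ab j).1)⁻¹ (ab j').2
    omega
  have hlower : mseq n j + mseq n j' - 2 * n ≤ wlen S (((ab j).1)⁻¹ * (ab j').2) := by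
    have := crossing_wlen hw hι hxy haj hbj'
    omega
  exact cross_not_mem_Tset hjne hlower hupper hmemT

end AuxNonSofic


/-- Every finitely generated group with at least two ends admits a
`G`-effectively closed subshift over the alphabet `{0,1,2}` which is not sofic. -/
theorem twoEnds_gEffectivelyClosed_not_sofic
    {G : Type} [Group G] {k : ℕ} (S : Fin k → G) (hS : IsGenData S)
    (hends : HasTwoOrMoreEnds S) :
    ∃ X : Set (G → Fin 3), IsSubshift X ∧ GEffectivelyClosed S X ∧ ¬ IsSofic X := by
  classical
  have hw : ∀ g : G, ∃ w : List (Fin k), wordEval S w = g := exists_word_of_gen hS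
  set ι : Fin k → Fin k := fun i => Classical.choose (hS.2.1 i) with hιdef
  have hι : ∀ i, S (ι i) = (S i)⁻¹ := fun i => Classical.choose_spec (hS.2.1 i)
  obtain ⟨n, x, y, hx, hy, hxI, hyI, hxy⟩ := hends
  exact ⟨XT S n, XT_isSubshift S n,
    ⟨CT S n, CT_rePredIn hw hι n, XT_eq_XC hw n⟩,
    XT_not_sofic hw hι hx hy hxI hyI hxy⟩

end SDG
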